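/- (Polar ultraspherical case.) Let a ∈ ℂ satisfy 2a + m ≠ 0 for every integer m ≥ −2, and let ξ ∈ ℂ. Then for every integer n ≥ 0 and all z ∈ ℂ, P_{n+1}(z;a,a;ξ) = z·P_n(z;a,a;ξ) − ((n+1)(2a+n−1)/((2a+2n−1)(2a+2n+1)))·P_{n−1}(z;a,a;ξ) + P_{n+1}^{(a−1,a−1)}(ξ), with the conventions P_{−1}(·;a,a;ξ) = 0 and P_0(·;a,a;ξ) = 1. -/

import Mathlib

open Polynomial

/-- Recurrence coefficient β_n^{(a,b)} of the monic Jacobi polynomials. -/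
noncomputable def jacobiBeta (a b : ℂ) (n : ℕ) : ℂ :=
  (b ^ 2 - a ^ 2) / ((a + b + 2 * n) * (a + b + 2 * n + 2))

/-- Recurrence coefficient γ_n^{(a,b)} of the monic Jacobi polynomials. -/
noncomputable def jacobiGamma (a b : ℂ) (n : ℕ) : ℂ :=
  (4 * n * (a + n) * (b + n) * (a + b + n)) /
    ((a + b + 2 * n - 1) * (a + b + 2 * n) ^ 2 * (a + b + 2 * n + 1))

/-- The monic Jacobi polynomials `P_n^{(a,b)}`, defined by the three-term recurrence
`P_{n+1} = (X - β_n) P_n - γ_n P_{n-1}` with `P_{-1} = 0`, `P_0 = 1`. -/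
noncomputable def jacobiP (a b : ℂ) : ℕ → Polynomial ℂ
  | 0 => 1
  | 1 => X - C (jacobiBeta a b 0)
  | n + 2 => (X - C (jacobiBeta a b (n + 1))) * jacobiP a b (n + 1)
      - C (jacobiGamma a b (n + 1)) * jacobiP a b n
/-- polar ultraspherical case: recurrence relation of the polar
ultraspherical polynomials `P_n(·;a,a;ξ)`, with conventions `P_{-1}=0`, `P_0=1`. -/
theorem polarUltraspherical_recurrence (a ξ : ℂ)
    (ha : ∀ m : ℤ, -2 ≤ m → 2 * a + (m : ℂ) ≠ 0)
    (P : ℕ → Polynomial ℂ)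
    (hP : ∀ (n : ℕ) (z : ℂ), (z - ξ) * (P n).eval z =
      (jacobiP (a - 1) (a - 1) (n + 1)).eval z - (jacobiP (a - 1) (a - 1) (n + 1)).eval ξ) :
    ∀ (n : ℕ) (z : ℂ),
      (P (n + 1)).eval z =
        z * (P n).eval z
        - (((n : ℂ) + 1) * (2 * a + n - 1) / ((2 * a + 2 * n - 1) * (2 * a + 2 * n + 1)))
            * (if n = 0 then (0 : ℂ) else (P (n - 1)).eval z)
        + (jacobiP (a - 1) (a - 1) (n + 1)).eval ξ := by
  intro n z
  set Q := jacobiP (a - 1) (a - 1) with hQ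
  have hXξ : (X - C ξ : Polynomial ℂ) ≠ 0 := X_sub_C_ne_zero ξ
  -- polynomial-level version of hP
  have hpoly : ∀ k : ℕ, (X - C ξ) * P k = Q (k + 1) - C ((Q (k + 1)).eval ξ) := by
    intro k
    apply Polynomial.funext
    intro r
    simpa using hP k r
  -- beta coefficients vanish
  have hβ : ∀ k, jacobiBeta (a - 1) (a - 1) k = 0 := by
    intro k; simp [jacobiBeta]
  -- recurrence for Q
  have hrec : Q (n + 2) = X * Q (n + 1) - C (jacobiGamma (a - 1) (a - 1) (n + 1)) * Q n := by
    rw [hQ]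
    rw [jacobiP]
    rw [hβ, map_zero, sub_zero]
  set γ := jacobiGamma (a - 1) (a - 1) (n + 1) with hγdef
  set q1 := (Q (n + 1)).eval ξ
  set q0 := (Q n).eval ξ
  have heval : (Q (n + 2)).eval ξ = ξ * q1 - γ * q0 := by
    rw [hrec]; simp; rfl
  -- the "previous" polynomial, with convention P_{-1} = 0
  set R : Polynomial ℂ := if n = 0 then 0 else P (n - 1) with hRdef
  have hR : (X - C ξ) * R = Q n - C q0 := by
    rcases n with _ | k
    · have h1 : q0 = 1 := by show (Q 0).eval ξ = 1; rw [hQ]; simp [jacobiP]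
      have h2 : Q 0 = 1 := by rw [hQ]; simp [jacobiP]
      rw [hRdef]
      simp [h1, h2]
    · simpa [hRdef] using hpoly k
  have key : P (n + 1) = X * P n - C γ * R + C q1 := by
    apply mul_left_cancel₀ hXξ
    have hC : C ((Q (n + 2)).eval ξ) = C ξ * C q1 - C γ * C q0 := by
      rw [heval, map_sub, map_mul, map_mul]
    have hp1 : (X - C ξ) * P (n + 1) = Q (n + 2) - C ((Q (n + 2)).eval ξ) := hpoly (n + 1)
    linear_combination hp1 - X * hpoly n + C γ * hR + hrec - hC
  -- nonzero denominators
  have h0 : (2 * a + 2 * (n : ℂ)) ≠ 0 := by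
    have h := ha (2 * n) (by omega); push_cast at h; exact h
  have h1 : (2 * a + 2 * (n : ℂ) - 1) ≠ 0 := by
    have h := ha (2 * n - 1) (by omega); push_cast at h
    intro hc; exact h (by linear_combination hc)
  have h3 : (2 * a + 2 * (n : ℂ) + 1) ≠ 0 := by
    have h := ha (2 * n + 1) (by omega); push_cast at h
    intro hc; exact h (by linear_combination hc)
  have hγval : γ = ((n : ℂ) + 1) * (2 * a + n - 1) / ((2 * a + 2 * n - 1) * (2 * a + 2 * n + 1)) := by
    rw [hγdef]
    unfold jacobiGamma
    push_cast
    rw [div_eq_div_iff]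
    · ring
    · apply mul_ne_zero (mul_ne_zero _ _)
      · intro hc; exact h3 (by linear_combination hc)
      · intro hc; exact h1 (by linear_combination hc)
      · apply pow_ne_zero; intro hc; exact h0 (by linear_combination hc)
    · exact mul_ne_zero h1 h3
  have := congrArg (eval z) key
  simp only [eval_add, eval_sub, eval_mul, eval_C, eval_X] at this
  rw [this, hγval]
  congr 1
  congr 1
  congr 1
  rcases n with _ | k
  · simp [hRdef]
  · simp [hRdef]
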